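/- arXiv:2604.21552 — 4 statements merged into one kernel-verified Lean document; each statement's English description precedes it below -/
import Mathlib

section
/- Let n ≥ 3. Then: (i) the double path P_{n,{1,n}} with loops exactly at vertices 1 and n allows the nSSP but does not require it (some A ∈ M(P_{n,{1,n}}) has the nSSP, and some A ∈ M(P_{n,{1,n}}) does not have the nSSP); and (ii) the double path P_{n,{2,…,n−1}} with loops exactly at vertices 2,…,n−1 does not require the nSSP (some A ∈ M(P_{n,{2,…,n−1}}) does not have the nSSP). -/
open Matrix

/-- `A` has the non-symmetric Strong Spectral Property (nSSP): the only matrix `X`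
with `A ∘ X = O` (Hadamard product) and `A Xᵀ - Xᵀ A = O` is `X = O`. -/
def HasNSSP {V : Type*} [Fintype V] (A : Matrix V V ℝ) : Prop :=
  ∀ X : Matrix V V ℝ,
    (∀ i j, A i j * X i j = 0) → A * Xᵀ - Xᵀ * A = 0 → X = 0

/-- `A ∈ M(G)`: the entry `A i j` is nonzero exactly when `(i,j)` is an arc of the digraph. -/
def MemPattern {V : Type*} (E : Set (V × V)) (A : Matrix V V ℝ) : Prop :=
  ∀ i j, A i j ≠ 0 ↔ (i, j) ∈ E

/-- The digraph with arc set `E` requires the nSSP. -/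
def RequiresNSSP {V : Type*} [Fintype V] (E : Set (V × V)) : Prop :=
  ∀ A : Matrix V V ℝ, MemPattern E A → HasNSSP A

/-- The digraph with arc set `E` allows the nSSP. -/
def AllowsNSSP {V : Type*} [Fintype V] (E : Set (V × V)) : Prop :=
  ∃ A : Matrix V V ℝ, MemPattern E A ∧ HasNSSP A

/-- Out-neighbourhood `N⁺_G[v]`. -/
def outNbhd {V : Type*} (E : Set (V × V)) (v : V) : Set V := {u | (v, u) ∈ E}

/-- In-neighbourhood `N⁻_G[v]`. -/
def inNbhd {V : Type*} (E : Set (V × V)) (v : V) : Set V := {w | (w, v) ∈ E}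

/-- The double path `P_{n,L}` on `n` vertices (0-indexed by `Fin n`, so that the
vertex with 1-based label `ℓ` is `⟨ℓ-1, _⟩`), with loops exactly at vertices in `L`. -/
def doublePathE (n : ℕ) (L : Set (Fin n)) : Set (Fin n × Fin n) :=
  {q | q.1.val + 1 = q.2.val ∨ q.2.val + 1 = q.1.val ∨ (q.1 = q.2 ∧ q.1 ∈ L)}

namespace NA



def aEnt (n : ℕ) (dd : ℕ → ℝ) : Matrix (Fin n) (Fin n) ℝ :=
  fun p q => (if (p:ℕ)+1 = (q:ℕ) then 1 else 0) + (if (q:ℕ)+1 = (p:ℕ) then 1 else 0)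
    + (if (p:ℕ) = (q:ℕ) then dd (p:ℕ) else 0)

lemma aEnt_symm (n : ℕ) (dd : ℕ → ℝ) (p q : Fin n) : aEnt n dd p q = aEnt n dd q p := by
  unfold aEnt
  have hdd : (if (p:ℕ) = (q:ℕ) then dd (p:ℕ) else 0)
      = (if (q:ℕ) = (p:ℕ) then dd (q:ℕ) else 0) := by
    by_cases h : (p:ℕ) = (q:ℕ)
    · simp [h]
    · have h' : ¬((q:ℕ) = (p:ℕ)) := fun hc => h hc.symm
      simp [h, h']
  rw [hdd]; ring

lemma comm_zero (n : ℕ) (A : Matrix (Fin n) (Fin n) ℝ) (hsym : ∀ p q, A p q = A q p)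
    (r : ℝ) (hrow : ∀ p, ∑ k, A p k = r) (α β : ℝ) :
    A * (Matrix.of fun p q => α - A p q - β * (if p = q then 1 else 0))ᵀ
      - (Matrix.of fun p q => α - A p q - β * (if p = q then 1 else 0))ᵀ * A = 0 := by
  ext p q
  simp only [Matrix.sub_apply, Matrix.mul_apply, Matrix.transpose_apply, Matrix.zero_apply,
    Matrix.of_apply]
  have h1 : ∀ k : Fin n, A p k * (α - A q k - β * (if q = k then 1 else 0))
      = α * A p k - A p k * A q k - β * (if q = k then A p k else 0) := by
    intro k; by_cases h : q = k <;> simp [h] <;> ring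
  have h2 : ∀ k : Fin n, (α - A k p - β * (if k = p then 1 else 0)) * A k q
      = α * A k q - A k p * A k q - β * (if k = p then A k q else 0) := by
    intro k; by_cases h : k = p <;> simp [h] <;> ring
  rw [Finset.sum_congr rfl fun k _ => h1 k, Finset.sum_congr rfl fun k _ => h2 k]
  rw [Finset.sum_sub_distrib, Finset.sum_sub_distrib, Finset.sum_sub_distrib,
    Finset.sum_sub_distrib]
  rw [← Finset.mul_sum, ← Finset.mul_sum, ← Finset.mul_sum, ← Finset.mul_sum]
  rw [Finset.sum_ite_eq Finset.univ q (fun k => A p k), Finset.sum_ite_eq' Finset.univ p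
    (fun k => A k q)]
  have hcol : ∑ k, A k q = r := by
    rw [Finset.sum_congr rfl fun k _ => hsym k q]; exact hrow q
  have hquad : ∑ k, A k p * A k q = ∑ k, A p k * A q k := by
    apply Finset.sum_congr rfl
    intro k _
    rw [hsym k p, hsym k q]
  rw [hrow p, hcol, hquad]
  rw [hsym p q]
  simp

lemma sum_row (n : ℕ) (dd : ℕ → ℝ) (p : Fin n) (g : Fin n → ℝ) :
    ∑ k, aEnt n dd p k * g k
      = (if h : (p:ℕ)+1 < n then g ⟨(p:ℕ)+1, h⟩ else 0)
        + (if h : 1 ≤ (p:ℕ) then g ⟨(p:ℕ)-1, by omega⟩ else 0)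
        + dd (p:ℕ) * g p := by
  have hsplit : ∀ k : Fin n, aEnt n dd p k * g k
      = (if (p:ℕ)+1 = (k:ℕ) then g k else 0) + (if (k:ℕ)+1 = (p:ℕ) then g k else 0)
        + (if (p:ℕ) = (k:ℕ) then dd (p:ℕ) * g k else 0) := by
    intro k
    simp [aEnt, add_mul, ite_mul]
  rw [Finset.sum_congr rfl (fun k _ => hsplit k), Finset.sum_add_distrib,
    Finset.sum_add_distrib]
  congr 1
  · congr 1
    · by_cases h : (p:ℕ)+1 < n
      · rw [dif_pos h, Finset.sum_eq_single (⟨(p:ℕ)+1, h⟩ : Fin n)]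
        · simp
        · intro k _ hk
          have hne : ¬((p:ℕ)+1 = (k:ℕ)) := by
            intro hc; exact hk (Fin.ext hc.symm)
          simp [hne]
        · intro habs; exact absurd (Finset.mem_univ _) habs
      · rw [dif_neg h]
        apply Finset.sum_eq_zero
        intro k _
        have : ¬((p:ℕ)+1 = (k:ℕ)) := by have := k.isLt; omega
        simp [this]
    · by_cases h : 1 ≤ (p:ℕ)
      · rw [dif_pos h, Finset.sum_eq_single (⟨(p:ℕ)-1, by omega⟩ : Fin n)]
        · simp; omega
        · intro k _ hk
          have hne : ¬((k:ℕ)+1 = (p:ℕ)) := by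
            intro hc; apply hk; apply Fin.ext; simp; omega
          simp [hne]
        · intro habs; exact absurd (Finset.mem_univ _) habs
      · rw [dif_neg h]
        apply Finset.sum_eq_zero
        intro k _
        have : ¬((k:ℕ)+1 = (p:ℕ)) := by omega
        simp [this]
  · rw [Finset.sum_eq_single p]
    · simp
    · intro k _ hk
      have hne : ¬((p:ℕ) = (k:ℕ)) := by
        intro hc; exact hk (Fin.ext hc.symm)
      simp [hne]
    · intro habs; exact absurd (Finset.mem_univ _) habs


-- diagonal functions
def dd2 (n : ℕ) : ℕ → ℝ := fun t => if t = 0 then 1 else if t = n - 1 then 1 else 0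
def dd3 (n : ℕ) : ℕ → ℝ := fun t => if t = 0 then 0 else if t = n - 1 then 0 else -1

lemma rowsum2 (n : ℕ) (hn : 3 ≤ n) (p : Fin n) : ∑ k, aEnt n (dd2 n) p k = 2 := by
  have h := sum_row n (dd2 n) p (fun _ => 1)
  simp only [mul_one] at h
  rw [h]
  have hp := p.isLt
  by_cases h0 : (p:ℕ) = 0
  · have e1 : dd2 n (p:ℕ) = 1 := by simp [dd2, h0]
    rw [dif_pos (by omega), dif_neg (by omega), e1]; norm_num
  · by_cases h1 : (p:ℕ) = n-1
    · have e1 : dd2 n (p:ℕ) = 1 := by simp [dd2, h0, h1]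
      rw [dif_neg (by omega), dif_pos (by omega), e1]; norm_num
    · have e1 : dd2 n (p:ℕ) = 0 := by simp [dd2, h0, h1]
      rw [dif_pos (by omega), dif_pos (by omega), e1]; norm_num

lemma rowsum3 (n : ℕ) (hn : 3 ≤ n) (p : Fin n) : ∑ k, aEnt n (dd3 n) p k = 1 := by
  have h := sum_row n (dd3 n) p (fun _ => 1)
  simp only [mul_one] at h
  rw [h]
  have hp := p.isLt
  by_cases h0 : (p:ℕ) = 0
  · have e1 : dd3 n (p:ℕ) = 0 := by simp [dd3, h0]
    rw [dif_pos (by omega), dif_neg (by omega), e1]; norm_num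
  · by_cases h1 : (p:ℕ) = n-1
    · have e1 : dd3 n (p:ℕ) = 0 := by simp [dd3, h0, h1]
      rw [dif_neg (by omega), dif_pos (by omega), e1]; norm_num
    · have e1 : dd3 n (p:ℕ) = -1 := by simp [dd3, h0, h1]
      rw [dif_pos (by omega), dif_pos (by omega), e1]; norm_num

lemma memPat (n : ℕ) (dd : ℕ → ℝ) (L : Set (Fin n))
    (hL : ∀ p : Fin n, (dd (p:ℕ) ≠ 0) ↔ p ∈ L) :
    MemPattern (doublePathE n L) (aEnt n dd) := by
  intro i j
  simp only [doublePathE, Set.mem_setOf_eq]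
  by_cases h1 : (i:ℕ)+1 = (j:ℕ)
  · have hv : aEnt n dd i j = 1 := by
      have e2 : ¬((j:ℕ)+1 = (i:ℕ)) := by omega
      have e3 : ¬((i:ℕ) = (j:ℕ)) := by omega
      simp [aEnt, h1, e2, e3]
    rw [hv]
    simp [h1]
  · by_cases h2 : (j:ℕ)+1 = (i:ℕ)
    · have hv : aEnt n dd i j = 1 := by
        have e3 : ¬((i:ℕ) = (j:ℕ)) := by omega
        simp [aEnt, h1, h2, e3]
      rw [hv]; simp [h1, h2]
    · by_cases h3 : (i:ℕ) = (j:ℕ)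
      · have hij : i = j := Fin.ext h3
        have hv : aEnt n dd i j = dd (i:ℕ) := by simp [aEnt, h1, h2, h3]
        rw [hv]
        subst hij
        simp [h1, h2]
        exact hL i
      · have hv : aEnt n dd i j = 0 := by simp [aEnt, h1, h2, h3]
        rw [hv]
        simp only [ne_eq, not_true_eq_false, false_iff]  -- may fail; fallback below
        push_neg
        constructor
        · exact fun h => absurd h h1
        constructor
        · exact fun h => absurd h h2
        · intro hc _; exact absurd (congrArg Fin.val hc) h3

lemma vals01 (n : ℕ) (dd : ℕ → ℝ) (hdd : ∀ t, dd t = 0 ∨ dd t = 1) (i j : Fin n) :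
    aEnt n dd i j = 0 ∨ aEnt n dd i j = 1 := by
  by_cases h1 : (i:ℕ)+1 = (j:ℕ)
  · right
    have e2 : ¬((j:ℕ)+1 = (i:ℕ)) := by omega
    have e3 : ¬((i:ℕ) = (j:ℕ)) := by omega
    simp [aEnt, h1, e2, e3]
  · by_cases h2 : (j:ℕ)+1 = (i:ℕ)
    · right
      have e3 : ¬((i:ℕ) = (j:ℕ)) := by omega
      simp [aEnt, h1, h2, e3]
    · by_cases h3 : (i:ℕ) = (j:ℕ)
      · have hv : aEnt n dd i j = dd (i:ℕ) := by simp [aEnt, h1, h2, h3]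
        rw [hv]; exact hdd _
      · left; simp [aEnt, h1, h2, h3]

lemma aEnt_diag (n : ℕ) (dd : ℕ → ℝ) (i : Fin n) : aEnt n dd i i = dd (i:ℕ) := by
  have e1 : ¬((i:ℕ)+1 = (i:ℕ)) := by omega
  simp [aEnt, e1]

lemma aEnt_02 (n : ℕ) (hn : 3 ≤ n) (dd : ℕ → ℝ) :
    aEnt n dd ⟨0, by omega⟩ ⟨2, by omega⟩ = 0 := by
  simp [aEnt]

lemma part2 (n : ℕ) (hn : 3 ≤ n) :
    ∃ A : Matrix (Fin n) (Fin n) ℝ,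
      MemPattern (doublePathE n {i : Fin n | i.val = 0 ∨ i.val = n - 1}) A ∧ ¬ HasNSSP A := by
  have hL2 : ∀ p : Fin n, (dd2 n (p:ℕ) ≠ 0) ↔ p ∈ {i : Fin n | i.val = 0 ∨ i.val = n - 1} := by
    intro p
    simp only [Set.mem_setOf_eq, dd2]
    split_ifs with a b <;> norm_num <;> omega
  refine ⟨aEnt n (dd2 n), memPat n _ _ hL2, ?_⟩
  intro hN
  set A : Matrix (Fin n) (Fin n) ℝ := aEnt n (dd2 n) with hA
  set X : Matrix (Fin n) (Fin n) ℝ :=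
    Matrix.of (fun p q => 1 - A p q - 0 * (if p = q then 1 else 0)) with hX
  have hdd01 : ∀ t, dd2 n t = 0 ∨ dd2 n t = 1 := by
    intro t; unfold dd2; split_ifs <;> norm_num
  have hHad : ∀ i j, A i j * X i j = 0 := by
    intro i j
    show A i j * (1 - A i j - 0 * (if i = j then 1 else 0)) = 0
    rcases vals01 n (dd2 n) hdd01 i j with h | h <;> rw [← hA] at h <;> rw [h] <;> ring
  have hComm := comm_zero n A (aEnt_symm n (dd2 n)) 2 (rowsum2 n hn) 1 0
  have hX0 := hN X hHad hComm
  have h02 : X ⟨0, by omega⟩ ⟨2, by omega⟩ = 1 := by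
    have hne : ¬((⟨0, by omega⟩ : Fin n) = ⟨2, by omega⟩) := by
      intro h; have := congrArg Fin.val h; simp at this
    show 1 - A _ _ - 0 * (if _ then (1:ℝ) else 0) = 1
    rw [hA, aEnt_02 n hn, if_neg hne]
    ring
  rw [hX0] at h02
  simp at h02

lemma part3 (n : ℕ) (hn : 3 ≤ n) :
    ∃ A : Matrix (Fin n) (Fin n) ℝ,
      MemPattern (doublePathE n {i : Fin n | i.val ≠ 0 ∧ i.val ≠ n - 1}) A ∧ ¬ HasNSSP A := by
  have hL3 : ∀ p : Fin n, (dd3 n (p:ℕ) ≠ 0) ↔ p ∈ {i : Fin n | i.val ≠ 0 ∧ i.val ≠ n - 1} := by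
    intro p
    simp only [Set.mem_setOf_eq, dd3]
    split_ifs with a b <;> norm_num <;> omega
  refine ⟨aEnt n (dd3 n), memPat n _ _ hL3, ?_⟩
  intro hN
  set A : Matrix (Fin n) (Fin n) ℝ := aEnt n (dd3 n) with hA
  set X : Matrix (Fin n) (Fin n) ℝ :=
    Matrix.of (fun p q => 1 - A p q - 2 * (if p = q then 1 else 0)) with hX
  have hHad : ∀ i j, A i j * X i j = 0 := by
    intro i j
    show A i j * (1 - A i j - 2 * (if i = j then 1 else 0)) = 0
    by_cases h3 : i = j
    · subst h3
      rw [if_pos rfl, hA, aEnt_diag]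
      have : dd3 n (i:ℕ) = 0 ∨ dd3 n (i:ℕ) = -1 := by
        unfold dd3; split_ifs <;> norm_num
      rcases this with h | h <;> rw [h] <;> ring
    · rw [if_neg h3]
      have h3' : ¬((i:ℕ) = (j:ℕ)) := fun hc => h3 (Fin.ext hc)
      have hv : aEnt n (dd3 n) i j = 0 ∨ aEnt n (dd3 n) i j = 1 := by
        by_cases h1 : (i:ℕ)+1 = (j:ℕ)
        · right
          have e2 : ¬((j:ℕ)+1 = (i:ℕ)) := by omega
          simp [aEnt, h1, e2, h3']
        · by_cases h2 : (j:ℕ)+1 = (i:ℕ)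
          · right; simp [aEnt, h1, h2, h3']
          · left; simp [aEnt, h1, h2, h3']
      rcases hv with h | h <;> rw [← hA] at h <;> rw [h] <;> ring
  have hComm := comm_zero n A (aEnt_symm n (dd3 n)) 1 (rowsum3 n hn) 1 2
  have hX0 := hN X hHad hComm
  have h02 : X ⟨0, by omega⟩ ⟨2, by omega⟩ = 1 := by
    have hne : ¬((⟨0, by omega⟩ : Fin n) = ⟨2, by omega⟩) := by
      intro h; have := congrArg Fin.val h; simp at this
    show 1 - A _ _ - 2 * (if _ then (1:ℝ) else 0) = 1
    rw [hA, aEnt_02 n hn, if_neg hne]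
    ring
  rw [hX0] at h02
  simp at h02



def dv (n k : ℕ) : ℝ := if k = 1 then 2 else if k = n then 3 else 0

structure Sys (n : ℕ) (y : ℕ → ℕ → ℝ) : Prop where
  h0 : ∀ a b, a = 0 ∨ n < a ∨ b = 0 ∨ n < b → y a b = 0
  hd1 : ∀ i, y i (i+1) = 0
  hd2 : ∀ i, y (i+1) i = 0
  h11 : y 1 1 = 0
  hnn : y n n = 0
  hE : ∀ a b, a + 1 ≤ n → b + 1 ≤ n →
      y a (b+1) + y (a+2) (b+1) + dv n (a+1) * y (a+1) (b+1)
        = y (a+1) b + y (a+1) (b+2) + dv n (b+1) * y (a+1) (b+1)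

variable {n : ℕ} {y : ℕ → ℕ → ℝ}

lemma dv1 (hn : 3 ≤ n) : dv n 1 = 2 := by simp [dv]

lemma dvn (hn : 3 ≤ n) : dv n n = 3 := by
  rw [dv, if_neg (by omega), if_pos rfl]

lemma dv0 (k : ℕ) (h1 : k ≠ 1) (h2 : k ≠ n) : dv n k = 0 := by
  rw [dv, if_neg h1, if_neg h2]

lemma sym (S : Sys n y) (hn : 3 ≤ n) : ∀ s i, y i (i+s) = y (i+s) i := by
  intro s
  induction s using Nat.strong_induction_on with
  | _ s IH =>
    rcases s with _ | s
    · simp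
    rcases s with _ | s
    · intro i; rw [S.hd1, S.hd2]
    -- s+2 case
    intro i
    induction i with
    | zero =>
      rw [S.h0 0 (0+(s+2)) (by omega), S.h0 (0+(s+2)) 0 (by omega)]
    | succ i ih =>
      by_cases hr : i + 1 + (s+2) ≤ n
      · have e1 := S.hE i (i+s+1) (by omega) (by omega)
        have e2 := S.hE (i+s+1) i (by omega) (by omega)
        have f1 : y i (i+s+2) = y (i+s+2) i := by
          have := ih
          have e : i + (s+2) = i+s+2 := by omega
          rw [e] at this; exact this
        have f2 : y (i+2) (i+s+2) = y (i+s+2) (i+2) := by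
          have := IH s (by omega) (i+2)
          have e : i+2+s = i+s+2 := by omega
          rw [e] at this
          exact this
        have f3 : y (i+1) (i+s+2) = y (i+s+2) (i+1) := by
          have := IH (s+1) (by omega) (i+1)
          have e : i+1+(s+1) = i+s+2 := by omega
          rw [e] at this; exact this
        have f4 : y (i+1) (i+s+1) = y (i+s+1) (i+1) := by
          have := IH s (by omega) (i+1)
          have e : i+1+s = i+s+1 := by omega
          rw [e] at this; exact this
        -- normalize index arithmetic inside e1 e2
        have g1 : i+s+1+1 = i+s+2 := by omega
        have g2 : i+s+1+2 = i+s+3 := by omega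
        rw [g1, g2] at e1 e2
        -- e1 : y i (i+s+2) + y (i+2) (i+s+2) + dv n (i+1) * y (i+1) (i+s+2)
        --    = y (i+1) (i+s+1) + y (i+1) (i+s+3) + dv n (i+s+2) * y (i+1) (i+s+2)
        -- e2 : y (i+s+1) (i+1) + y (i+s+3) (i+1) + dv n (i+s+2) * y (i+s+2) (i+1)
        --    = y (i+s+2) i + y (i+s+2) (i+2) + dv n (i+1) * y (i+s+2) (i+1)
        have etgt : i + 1 + (s+2) = i+s+3 := by omega
        rw [etgt]
        rw [f1, f2, f3, f4] at e1
        linarith [e1, e2]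
      · rw [S.h0 (i+1) (i+1+(s+2)) (by omega), S.h0 (i+1+(s+2)) (i+1) (by omega)]

lemma symm' (S : Sys n y) (hn : 3 ≤ n) : ∀ a b, y a b = y b a := by
  intro a b
  rcases Nat.le_total a b with h | h
  · obtain ⟨s, rfl⟩ := Nat.exists_eq_add_of_le h
    exact sym S hn s a
  · obtain ⟨s, rfl⟩ := Nat.exists_eq_add_of_le h
    exact (sym S hn s b).symm

lemma diag2 (S : Sys n y) (hn : 3 ≤ n) : ∀ i, y i (i+2) = y (i+1) (i+1) := by
  intro i
  induction i with
  | zero =>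
    rw [S.h0 0 2 (by omega), S.h11]
  | succ i ih =>
    by_cases hr : i + 3 ≤ n
    · have e1 := S.hE i (i+1) (by omega) (by omega)
      -- e1 : y i (i+2) + y (i+2) (i+2) + dv n (i+1) * y (i+1) (i+2)?? check: b+1 = i+2
      have g1 : i+1+1 = i+2 := by omega
      have g2 : i+1+2 = i+3 := by omega
      rw [g1, g2] at e1
      rw [S.hd1 (i+1)] at e1
      have etgt : i+1+2 = i+3 := by omega
      rw [etgt]
      rw [ih] at e1
      linarith [e1]
    · rcases Nat.lt_or_ge n (i+2) with h | h
      · rw [S.h0 (i+1) (i+1+2) (by omega), S.h0 (i+2) (i+2) (by omega)]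
      · have hi2 : i + 2 = n := by omega
        rw [S.h0 (i+1) (i+1+2) (by omega), hi2, S.hnn]

lemma levels (S : Sys n y) (hn : 3 ≤ n) (m : ℕ)
    (hU : ∀ j, (j ≤ m+1 ∨ n ≤ j+m) → y j j = 0) :
    ∀ k, (k ≤ m+1 → ∀ i, y i (i+2*k) = y (i+k) (i+k))
      ∧ (k ≤ m → ∀ i, y i (i+2*k+1) = 0) := by
  intro k
  induction k with
  | zero =>
    constructor
    · intro _ i; norm_num
    · intro _ i; simpa using S.hd1 i
  | succ k IH =>
    obtain ⟨Ek, Ok⟩ := IH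
    have Ek1 : k+1 ≤ m+1 → ∀ i, y i (i+2*(k+1)) = y (i+(k+1)) (i+(k+1)) := by
      intro hk
      have hEk := Ek (by omega)
      have hOk := Ok (by omega)
      intro i
      induction i with
      | zero =>
        rw [S.h0 0 (0+2*(k+1)) (by omega), hU (0+(k+1)) (by omega)]
      | succ i ih =>
        by_cases hr : i+1+2*(k+1) ≤ n
        · have e1 := S.hE i (i+2*k+1) (by omega) (by omega)
          have g1 : i+2*k+1+1 = i+2*k+2 := by omega
          have g2 : i+2*k+1+2 = i+2*k+3 := by omega
          rw [g1, g2] at e1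
          have fih : y i (i+2*k+2) = y (i+k+1) (i+k+1) := by
            have := ih
            have e : i+2*(k+1) = i+2*k+2 := by omega
            have e' : i+(k+1) = i+k+1 := by omega
            rw [e, e'] at this; exact this
          have f2 : y (i+2) (i+2*k+2) = y (i+k+2) (i+k+2) := by
            have := hEk (i+2)
            have e : i+2+2*k = i+2*k+2 := by omega
            have e' : i+2+k = i+k+2 := by omega
            rw [e, e'] at this; exact this
          have f3 : y (i+1) (i+2*k+2) = 0 := by
            have := hOk (i+1)
            have e : i+1+2*k+1 = i+2*k+2 := by omega
            rw [e] at this; exact this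
          have f4 : y (i+1) (i+2*k+1) = y (i+k+1) (i+k+1) := by
            have := hEk (i+1)
            have e : i+1+2*k = i+2*k+1 := by omega
            have e' : i+1+k = i+k+1 := by omega
            rw [e, e'] at this; exact this
          have etgt : i+1+2*(k+1) = i+2*k+3 := by omega
          have etgt' : i+1+(k+1) = i+k+2 := by omega
          rw [etgt, etgt']
          rw [fih, f2, f3, f4, mul_zero, mul_zero] at e1
          linarith [e1]
        · rw [S.h0 (i+1) (i+1+2*(k+1)) (by omega), hU (i+1+(k+1)) (by omega)]
    have Ok1 : k+1 ≤ m → ∀ i, y i (i+2*(k+1)+1) = 0 := by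
      intro hk
      have hEk1 := Ek1 (by omega)
      have hOk := Ok (by omega)
      intro i
      induction i with
      | zero =>
        rw [S.h0 0 (0+2*(k+1)+1) (by omega)]
      | succ i ih =>
        by_cases hr : i+1+2*(k+1)+1 ≤ n
        · have e1 := S.hE i (i+2*k+2) (by omega) (by omega)
          have g1 : i+2*k+2+1 = i+2*k+3 := by omega
          have g2 : i+2*k+2+2 = i+2*k+4 := by omega
          rw [g1, g2] at e1
          have fih : y i (i+2*k+3) = 0 := by
            have := ih
            have e : i+2*(k+1)+1 = i+2*k+3 := by omega
            rw [e] at this; exact this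
          have f2 : y (i+2) (i+2*k+3) = 0 := by
            have := hOk (i+2)
            have e : i+2+2*k+1 = i+2*k+3 := by omega
            rw [e] at this; exact this
          have f3 : y (i+1) (i+2*k+2) = 0 := by
            have := hOk (i+1)
            have e : i+1+2*k+1 = i+2*k+2 := by omega
            rw [e] at this; exact this
          have hz : dv n (i+1) * y (i+1) (i+2*k+3) = 0 := by
            rcases Nat.eq_zero_or_pos i with rfl | hi
            · have hv : y (0+1) (0+2*k+3) = y (k+2) (k+2) := by
                have h := hEk1 1
                have e : (1:ℕ)+2*(k+1) = 2*k+3 := by omega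
                have e' : (1:ℕ)+(k+1) = k+2 := by omega
                rw [e, e'] at h
                have e2 : (0:ℕ)+1 = 1 := by omega
                have e3 : 0+2*k+3 = 2*k+3 := by omega
                rw [e2, e3]
                exact h
              rw [hv, hU (k+2) (by omega), mul_zero]
            · rw [dv0 (i+1) (by omega) (by omega), zero_mul]
          have hz2 : dv n (i+2*k+3) * y (i+1) (i+2*k+3) = 0 := by
            rw [dv0 (i+2*k+3) (by omega) (by omega), zero_mul]
          have etgt : i+1+2*(k+1)+1 = i+2*k+4 := by omega
          rw [etgt]
          rw [fih, f2, f3] at e1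
          rw [hz, hz2] at e1
          linarith [e1]
        · rw [S.h0 (i+1) (i+1+2*(k+1)+1) (by omega)]
    exact ⟨Ek1, Ok1⟩

lemma Ustep (S : Sys n y) (hn : 3 ≤ n) (m : ℕ)
    (hU : ∀ j, (j ≤ m+1 ∨ n ≤ j+m) → y j j = 0) :
    ∀ j, (j ≤ m+2 ∨ n ≤ j+m+1) → y j j = 0 := by
  have L := levels S hn m hU
  have Ok_m : ∀ i, y i (i+2*m+1) = 0 := (L m).2 (le_refl m)
  have Ek_m1 : ∀ i, y i (i+2*m+2) = y (i+m+1) (i+m+1) := by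
    intro i
    have := (L (m+1)).1 (le_refl _) i
    have e : i+2*(m+1) = i+2*m+2 := by omega
    have e' : i+(m+1) = i+m+1 := by omega
    rw [e, e'] at this; exact this
  by_cases hA : n ≤ 2*m+2
  · intro j hj
    apply hU j
    omega
  · by_cases hB : n = 2*m+3
    · have key : y (m+2) (m+2) = 0 := by
        have e1 := S.hE 0 (2*m+2) (by omega) (by omega)
        have t1 : y 0 (2*m+2+1) = 0 := S.h0 _ _ (by omega)
        have t2 : y (0+2) (2*m+2+1) = 0 := by
          have := Ok_m 2
          have e : 2+2*m+1 = 2*m+2+1 := by omega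
          rw [e] at this
          have e' : (0:ℕ)+2 = 2 := by omega
          rw [e']; exact this
        have t3 : y (0+1) (2*m+2+1) = y (m+2) (m+2) := by
          have := Ek_m1 1
          have e : 1+2*m+2 = 2*m+2+1 := by omega
          have e' : 1+m+1 = m+2 := by omega
          rw [e, e'] at this
          have e'' : (0:ℕ)+1 = 1 := by omega
          rw [e'']; exact this
        have t4 : y (0+1) (2*m+2) = 0 := by
          have := Ok_m 1
          have e : 1+2*m+1 = 2*m+2 := by omega
          rw [e] at this
          have e' : (0:ℕ)+1 = 1 := by omega
          rw [e']; exact this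
        have t5 : y (0+1) (2*m+2+2) = 0 := S.h0 _ _ (by omega)
        have hd1' : dv n (0+1) = 2 := by
          have e : (0:ℕ)+1 = 1 := by omega
          rw [e]; exact dv1 hn
        have hdn' : dv n (2*m+2+1) = 3 := by
          have e : 2*m+2+1 = n := by omega
          rw [e]; exact dvn hn
        rw [t1, t2, t3, t4, t5, hd1', hdn'] at e1
        linarith [e1]
      intro j hj
      by_cases hc : j ≤ m+1 ∨ n ≤ j+m
      · exact hU j hc
      · have : j = m+2 := by omega
        rw [this]; exact key
    · -- case C : n ≥ 2*m+4
      have hC : 2*m+4 ≤ n := by omega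
      obtain ⟨a, hna, ha1⟩ : ∃ a, n = a+2*m+3 ∧ 1 ≤ a := ⟨n-(2*m+3), by omega, by omega⟩
      -- diag 2m+3 lemma
      have T : ∀ i, 1 ≤ i → i+2*m+3 ≤ n → y i (i+2*m+3) = 2 * y (m+2) (m+2) := by
        intro i
        induction i with
        | zero => intro h1 _; exact absurd h1 (by norm_num)
        | succ i ih =>
          intro _ hr
          rcases Nat.eq_zero_or_pos i with rfl | hi
          · have e1 := S.hE 0 (2*m+2) (by omega) (by omega)
            have t1 : y 0 (2*m+2+1) = 0 := S.h0 _ _ (by omega)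
            have t2 : y (0+2) (2*m+2+1) = 0 := by
              have := Ok_m 2
              have e : 2+2*m+1 = 2*m+2+1 := by omega
              rw [e] at this
              have e' : (0:ℕ)+2 = 2 := by omega
              rw [e']; exact this
            have t3 : y (0+1) (2*m+2+1) = y (m+2) (m+2) := by
              have := Ek_m1 1
              have e : 1+2*m+2 = 2*m+2+1 := by omega
              have e' : 1+m+1 = m+2 := by omega
              rw [e, e'] at this
              have e'' : (0:ℕ)+1 = 1 := by omega
              rw [e'']; exact this
            have t4 : y (0+1) (2*m+2) = 0 := by
              have := Ok_m 1
              have e : 1+2*m+1 = 2*m+2 := by omega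
              rw [e] at this
              have e' : (0:ℕ)+1 = 1 := by omega
              rw [e']; exact this
            have hd1' : dv n (0+1) = 2 := by
              have e : (0:ℕ)+1 = 1 := by omega
              rw [e]; exact dv1 hn
            have hdn' : dv n (2*m+2+1) = 0 := by
              apply dv0 <;> omega
            rw [t1, t2, t3, t4, hd1', hdn'] at e1
            have etgt : 0+1+2*m+3 = 2*m+2+2 := by omega
            have etgt2 : (0:ℕ)+1 = 1 := by omega
            rw [etgt2] at e1 ⊢
            rw [etgt]
            linarith [e1]
          · have e1 := S.hE i (i+2*m+2) (by omega) (by omega)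
            have g1 : i+2*m+2+1 = i+2*m+3 := by omega
            have g2 : i+2*m+2+2 = i+2*m+4 := by omega
            rw [g1, g2] at e1
            have t1 : y i (i+2*m+3) = 2 * y (m+2) (m+2) := ih hi (by omega)
            have t2 : y (i+2) (i+2*m+3) = 0 := by
              have := Ok_m (i+2)
              have e : i+2+2*m+1 = i+2*m+3 := by omega
              rw [e] at this; exact this
            have t4 : y (i+1) (i+2*m+2) = 0 := by
              have := Ok_m (i+1)
              have e : i+1+2*m+1 = i+2*m+2 := by omega
              rw [e] at this; exact this
            have hd1' : dv n (i+1) = 0 := by apply dv0 <;> omega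
            have hdn' : dv n (i+2*m+3) = 0 := by apply dv0 <;> omega
            rw [t1, t2, t4, hd1', hdn'] at e1
            have etgt : i+1+2*m+3 = i+2*m+4 := by omega
            rw [etgt]
            linarith [e1]
      -- star1 : 2 u = 3 y(a+m+2)
      have star1 : 2 * y (m+2) (m+2) = 3 * y (a+m+2) (a+m+2) := by
        have e1 := S.hE a (a+2*m+2) (by omega) (by omega)
        have g1 : a+2*m+2+1 = a+2*m+3 := by omega
        have g2 : a+2*m+2+2 = a+2*m+4 := by omega
        rw [g1, g2] at e1
        have t1 : y a (a+2*m+3) = 2 * y (m+2) (m+2) := T a ha1 (by omega)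
        have t2 : y (a+2) (a+2*m+3) = 0 := by
          have := Ok_m (a+2)
          have e : a+2+2*m+1 = a+2*m+3 := by omega
          rw [e] at this; exact this
        have t3 : dv n (a+1) = 0 := by apply dv0 <;> omega
        have t4 : y (a+1) (a+2*m+2) = 0 := by
          have := Ok_m (a+1)
          have e : a+1+2*m+1 = a+2*m+2 := by omega
          rw [e] at this; exact this
        have t5 : y (a+1) (a+2*m+4) = 0 := S.h0 _ _ (by omega)
        have t6 : dv n (a+2*m+3) = 3 := by
          have e : a+2*m+3 = n := by omega
          rw [e]; exact dvn hn
        have t7 : y (a+1) (a+2*m+3) = y (a+m+2) (a+m+2) := by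
          have := Ek_m1 (a+1)
          have e : a+1+2*m+2 = a+2*m+3 := by omega
          have e' : a+1+m+1 = a+m+2 := by omega
          rw [e, e'] at this; exact this
        rw [t1, t2, t3, t4, t5, t6, t7] at e1
        linarith [e1]
      have hu : y (m+2) (m+2) = 0 ∧ y (a+m+2) (a+m+2) = 0 := by
        rcases Nat.eq_or_lt_of_le ha1 with ha1' | ha2
        · -- a = 1 : n = 2m+4, corner equation
          have han : n = 2*m+4 := by omega
          have e1 := S.hE 0 (2*m+3) (by omega) (by omega)
          have t1 : y 0 (2*m+3+1) = 0 := S.h0 _ _ (by omega)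
          have t2 : y (0+2) (2*m+3+1) = y (m+3) (m+3) := by
            have := Ek_m1 2
            have e : 2+2*m+2 = 2*m+3+1 := by omega
            have e' : 2+m+1 = m+3 := by omega
            rw [e, e'] at this
            have e'' : (0:ℕ)+2 = 2 := by omega
            rw [e'']; exact this
          have t3 : y (0+1) (2*m+3+1) = 2 * y (m+2) (m+2) := by
            have := T 1 (by omega) (by omega)
            have e : 1+2*m+3 = 2*m+3+1 := by omega
            rw [e] at this
            have e'' : (0:ℕ)+1 = 1 := by omega
            rw [e'']; exact this
          have t4 : y (0+1) (2*m+3) = y (m+2) (m+2) := by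
            have := Ek_m1 1
            have e : 1+2*m+2 = 2*m+3 := by omega
            have e' : 1+m+1 = m+2 := by omega
            rw [e, e'] at this
            have e'' : (0:ℕ)+1 = 1 := by omega
            rw [e'']; exact this
          have t5 : y (0+1) (2*m+3+2) = 0 := S.h0 _ _ (by omega)
          have hd1' : dv n (0+1) = 2 := by
            have e : (0:ℕ)+1 = 1 := by omega
            rw [e]; exact dv1 hn
          have hdn' : dv n (2*m+3+1) = 3 := by
            have e : 2*m+3+1 = n := by omega
            rw [e]; exact dvn hn
          rw [t1, t2, t3, t4, t5, hd1', hdn'] at e1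
          -- e1 : 0 + y(m+3)² + 2*(2u) = u + 0 + 3*(2u)  =>  y(m+3)² = 3u
          have hm3 : y (m+3) (m+3) = 3 * y (m+2) (m+2) := by linarith [e1]
          have ham : a+m+2 = m+3 := by omega
          rw [ham]
          rw [ham] at star1
          constructor
          · linarith [star1, hm3]
          · rw [hm3]
            have : y (m+2) (m+2) = 0 := by linarith [star1, hm3]
            rw [this]; ring
        · -- a ≥ 2 : n ≥ 2m+5, need diag 2m+4 lemma V
          have ha2' : 2 ≤ a := ha2
          have V : ∀ i, 1 ≤ i → i+2*m+4 ≤ n →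
              y i (i+2*m+4) = y (i+m+2) (i+m+2) + 3 * y (m+2) (m+2) := by
            intro i
            induction i with
            | zero => intro h1 _; exact absurd h1 (by norm_num)
            | succ i ih =>
              intro _ hr
              rcases Nat.eq_zero_or_pos i with rfl | hi
              · have e1 := S.hE 0 (2*m+3) (by omega) (by omega)
                have t1 : y 0 (2*m+3+1) = 0 := S.h0 _ _ (by omega)
                have t2 : y (0+2) (2*m+3+1) = y (m+3) (m+3) := by
                  have := Ek_m1 2
                  have e : 2+2*m+2 = 2*m+3+1 := by omega
                  have e' : 2+m+1 = m+3 := by omega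
                  rw [e, e'] at this
                  have e'' : (0:ℕ)+2 = 2 := by omega
                  rw [e'']; exact this
                have t3 : y (0+1) (2*m+3+1) = 2 * y (m+2) (m+2) := by
                  have := T 1 (by omega) (by omega)
                  have e : 1+2*m+3 = 2*m+3+1 := by omega
                  rw [e] at this
                  have e'' : (0:ℕ)+1 = 1 := by omega
                  rw [e'']; exact this
                have t4 : y (0+1) (2*m+3) = y (m+2) (m+2) := by
                  have := Ek_m1 1
                  have e : 1+2*m+2 = 2*m+3 := by omega
                  have e' : 1+m+1 = m+2 := by omega
                  rw [e, e'] at this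
                  have e'' : (0:ℕ)+1 = 1 := by omega
                  rw [e'']; exact this
                have hd1' : dv n (0+1) = 2 := by
                  have e : (0:ℕ)+1 = 1 := by omega
                  rw [e]; exact dv1 hn
                have hdn' : dv n (2*m+3+1) = 0 := by apply dv0 <;> omega
                rw [t1, t2, t3, t4, hd1', hdn'] at e1
                have etgt : 0+1+2*m+4 = 2*m+3+2 := by omega
                have etgt2 : (0:ℕ)+1 = 1 := by omega
                have etgt3 : 0+1+m+2 = m+3 := by omega
                rw [etgt2] at e1 ⊢
                rw [etgt, etgt3]
                linarith [e1]
              · have e1 := S.hE i (i+2*m+3) (by omega) (by omega)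
                have g1 : i+2*m+3+1 = i+2*m+4 := by omega
                have g2 : i+2*m+3+2 = i+2*m+5 := by omega
                rw [g1, g2] at e1
                have t1 : y i (i+2*m+4) = y (i+m+2) (i+m+2) + 3 * y (m+2) (m+2) :=
                  ih hi (by omega)
                have t2 : y (i+2) (i+2*m+4) = y (i+m+3) (i+m+3) := by
                  have := Ek_m1 (i+2)
                  have e : i+2+2*m+2 = i+2*m+4 := by omega
                  have e' : i+2+m+1 = i+m+3 := by omega
                  rw [e, e'] at this; exact this
                have t3 : dv n (i+1) = 0 := by apply dv0 <;> omega
                have t4 : y (i+1) (i+2*m+3) = y (i+m+2) (i+m+2) := by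
                  have := Ek_m1 (i+1)
                  have e : i+1+2*m+2 = i+2*m+3 := by omega
                  have e' : i+1+m+1 = i+m+2 := by omega
                  rw [e, e'] at this; exact this
                have t5 : dv n (i+2*m+4) = 0 := by apply dv0 <;> omega
                rw [t1, t2, t3, t4, t5] at e1
                have etgt : i+1+2*m+4 = i+2*m+5 := by omega
                have etgt2 : i+1+m+2 = i+m+3 := by omega
                rw [etgt, etgt2]
                linarith [e1]
          -- star2 via boundary at row a = c+1
          obtain ⟨c, rfl⟩ : ∃ c, a = c+1 := ⟨a-1, by omega⟩
          have hc1 : 1 ≤ c := by omega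
          have e1 := S.hE c (c+2*m+3) (by omega) (by omega)
          have g1 : c+2*m+3+1 = c+2*m+4 := by omega
          have g2 : c+2*m+3+2 = c+2*m+5 := by omega
          rw [g1, g2] at e1
          have t1 : y c (c+2*m+4) = y (c+m+2) (c+m+2) + 3 * y (m+2) (m+2) :=
            V c hc1 (by omega)
          have t2 : y (c+2) (c+2*m+4) = y (c+m+3) (c+m+3) := by
            have := Ek_m1 (c+2)
            have e : c+2+2*m+2 = c+2*m+4 := by omega
            have e' : c+2+m+1 = c+m+3 := by omega
            rw [e, e'] at this; exact this
          have t3 : dv n (c+1) = 0 := by apply dv0 <;> omega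
          have t4 : y (c+1) (c+2*m+3) = y (c+m+2) (c+m+2) := by
            have := Ek_m1 (c+1)
            have e : c+1+2*m+2 = c+2*m+3 := by omega
            have e' : c+1+m+1 = c+m+2 := by omega
            rw [e, e'] at this; exact this
          have t5 : y (c+1) (c+2*m+5) = 0 := S.h0 _ _ (by omega)
          have t6 : dv n (c+2*m+4) = 3 := by
            have e : c+2*m+4 = n := by omega
            rw [e]; exact dvn hn
          have t7 : y (c+1) (c+2*m+4) = 2 * y (m+2) (m+2) := by
            have := T (c+1) (by omega) (by omega)
            have e : c+1+2*m+3 = c+2*m+4 := by omega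
            rw [e] at this; exact this
          rw [t1, t2, t3, t4, t5, t6, t7] at e1
          -- e1 : (y(c+m+2)²+3u) + y(c+m+3)² + 0 = y(c+m+2)² + 0 + 3*(2u)
          have hm3 : y (c+m+3) (c+m+3) = 3 * y (m+2) (m+2) := by linarith [e1]
          have ham : c+1+m+2 = c+m+3 := by omega
          rw [ham] at star1
          have hu0 : y (m+2) (m+2) = 0 := by linarith [star1, hm3]
          refine ⟨hu0, ?_⟩
          rw [ham, hm3, hu0]
          ring
      intro j hj
      by_cases hcc : j ≤ m+1 ∨ n ≤ j+m
      · exact hU j hcc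
      · have : j = m+2 ∨ j = a+m+2 := by omega
        rcases this with h | h
        · rw [h]; exact hu.1
        · rw [h]; exact hu.2

lemma Uall (S : Sys n y) (hn : 3 ≤ n) :
    ∀ m j, (j ≤ m+1 ∨ n ≤ j+m) → y j j = 0 := by
  intro m
  induction m with
  | zero =>
    intro j hj
    rcases hj with h | h
    · interval_cases j
      · exact S.h0 0 0 (by omega)
      · exact S.h11
    · by_cases hj2 : j = n
      · rw [hj2]; exact S.hnn
      · exact S.h0 j j (by omega)
  | succ m ih => exact Ustep S hn m ih

lemma all_zero (S : Sys n y) (hn : 3 ≤ n) : ∀ a b, y a b = 0 := by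
  have hUall : ∀ j, y j j = 0 := fun j => Uall S hn n j (by omega)
  have L := levels S hn n (fun j _ => hUall j)
  have upper : ∀ s i, y i (i+s) = 0 := by
    intro s i
    rcases Nat.even_or_odd s with ⟨k, hk⟩ | ⟨k, hk⟩
    · by_cases hks : k ≤ n+1
      · have := (L k).1 hks i
        have e : i+2*k = i+s := by omega
        rw [e] at this
        rw [this]
        exact hUall (i+k)
      · exact S.h0 i (i+s) (by omega)
    · by_cases hks : k ≤ n
      · have := (L k).2 hks i
        have e : i+2*k+1 = i+s := by omega
        rw [e] at this
        exact this
      · exact S.h0 i (i+s) (by omega)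
  intro a b
  rcases Nat.le_total a b with h | h
  · obtain ⟨s, rfl⟩ := Nat.exists_eq_add_of_le h
    exact upper s a
  · obtain ⟨s, rfl⟩ := Nat.exists_eq_add_of_le h
    rw [symm' S hn (b+s) b]
    exact upper s b


def dd1 (n : ℕ) : ℕ → ℝ := fun t => if t = 0 then 2 else if t = n - 1 then 3 else 0

lemma dd1_dv (n : ℕ) (hn : 3 ≤ n) (a : ℕ) (ha : a < n) : dd1 n a = dv n (a+1) := by
  unfold dd1 dv
  split_ifs <;> first | rfl | (exfalso; omega)


lemma aEnt_sup (n : ℕ) (dd : ℕ → ℝ) (p q : Fin n) (h : (p:ℕ)+1 = (q:ℕ)) :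
    aEnt n dd p q = 1 := by
  have e2 : ¬((q:ℕ)+1 = (p:ℕ)) := by omega
  have e3 : ¬((p:ℕ) = (q:ℕ)) := by omega
  simp [aEnt, h, e2, e3]

lemma aEnt_sub (n : ℕ) (dd : ℕ → ℝ) (p q : Fin n) (h : (q:ℕ)+1 = (p:ℕ)) :
    aEnt n dd p q = 1 := by
  have e1 : ¬((p:ℕ)+1 = (q:ℕ)) := by omega
  have e3 : ¬((p:ℕ) = (q:ℕ)) := by omega
  simp [aEnt, e1, h, e3]

lemma part1 (n : ℕ) (hn : 3 ≤ n) :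
    ∃ A : Matrix (Fin n) (Fin n) ℝ,
      MemPattern (doublePathE n {i : Fin n | i.val = 0 ∨ i.val = n - 1}) A ∧ HasNSSP A := by
  have hL1 : ∀ p : Fin n, (dd1 n (p:ℕ) ≠ 0) ↔ p ∈ {i : Fin n | i.val = 0 ∨ i.val = n - 1} := by
    intro p
    simp only [Set.mem_setOf_eq, dd1]
    split_ifs with a b <;> norm_num <;> omega
  refine ⟨aEnt n (dd1 n), memPat n _ _ hL1, ?_⟩
  intro X hHad hComm
  have hXpat : ∀ (p q : Fin n), aEnt n (dd1 n) p q ≠ 0 → X p q = 0 := by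
    intro p q hA
    exact (mul_eq_zero.mp (hHad p q)).resolve_left hA
  set y : ℕ → ℕ → ℝ := fun a b =>
    if h : 1 ≤ a ∧ a ≤ n ∧ 1 ≤ b ∧ b ≤ n then
      X ⟨b-1, by omega⟩ ⟨a-1, by omega⟩ else 0 with hy
  have hyin : ∀ a b, ∀ (h1 : 1 ≤ a) (h2 : a ≤ n) (h3 : 1 ≤ b) (h4 : b ≤ n),
      y a b = X ⟨b-1, by omega⟩ ⟨a-1, by omega⟩ := by
    intro a b h1 h2 h3 h4
    rw [hy]
    exact dif_pos ⟨h1, h2, h3, h4⟩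
  have hyout : ∀ a b, (a = 0 ∨ n < a ∨ b = 0 ∨ n < b) → y a b = 0 := by
    intro a b h
    rw [hy]
    exact dif_neg (by omega)
  have hd1 : ∀ i, y i (i+1) = 0 := by
    intro i
    by_cases h : 1 ≤ i ∧ i+1 ≤ n
    · rw [hyin i (i+1) (by omega) (by omega) (by omega) (by omega)]
      apply hXpat
      rw [aEnt_sub n (dd1 n) _ _ (by simp; omega)]
      norm_num
    · exact hyout i (i+1) (by omega)
  have hd2 : ∀ i, y (i+1) i = 0 := by
    intro i
    by_cases h : 1 ≤ i ∧ i+1 ≤ n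
    · rw [hyin (i+1) i (by omega) (by omega) (by omega) (by omega)]
      apply hXpat
      rw [aEnt_sup n (dd1 n) _ _ (by simp; omega)]
      norm_num
    · exact hyout (i+1) i (by omega)
  have h11 : y 1 1 = 0 := by
    rw [hyin 1 1 (by omega) (by omega) (by omega) (by omega)]
    apply hXpat
    rw [aEnt_diag]
    show dd1 n 0 ≠ 0
    unfold dd1
    rw [if_pos rfl]
    norm_num
  have hnn : y n n = 0 := by
    rw [hyin n n (by omega) (by omega) (by omega) (by omega)]
    apply hXpat
    rw [aEnt_diag]
    show dd1 n (n-1) ≠ 0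
    unfold dd1
    rw [if_neg (by omega), if_pos rfl]
    norm_num
  have hE : ∀ a b, a + 1 ≤ n → b + 1 ≤ n →
      y a (b+1) + y (a+2) (b+1) + dv n (a+1) * y (a+1) (b+1)
        = y (a+1) b + y (a+1) (b+2) + dv n (b+1) * y (a+1) (b+1) := by
    intro a b ha hb
    have hc := congrFun (congrFun hComm ⟨a, by omega⟩) ⟨b, by omega⟩
    simp only [Matrix.sub_apply, Matrix.mul_apply, Matrix.transpose_apply,
      Matrix.zero_apply, sub_eq_zero] at hc
    have hL := sum_row n (dd1 n) ⟨a, by omega⟩ (fun k => X ⟨b, by omega⟩ k)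
    have hRrw : ∑ k, X k ⟨a, by omega⟩ * aEnt n (dd1 n) k ⟨b, by omega⟩
        = ∑ k, aEnt n (dd1 n) ⟨b, by omega⟩ k * X k ⟨a, by omega⟩ := by
      apply Finset.sum_congr rfl
      intro k _
      rw [aEnt_symm n (dd1 n) k ⟨b, by omega⟩]
      ring
    have hR := sum_row n (dd1 n) ⟨b, by omega⟩ (fun k => X k ⟨a, by omega⟩)
    rw [hL, hRrw, hR] at hc
    -- now translate each dite to ghost y values
    have c1 : (if h : (a:ℕ)+1 < n then X ⟨b, by omega⟩ ⟨a+1, h⟩ else 0) = y (a+2) (b+1) := by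
      by_cases h : a+1 < n
      · rw [dif_pos h, hyin (a+2) (b+1) (by omega) (by omega) (by omega) (by omega)]
        congr 1 <;> exact Fin.ext (by simp)
      · rw [dif_neg h, hyout (a+2) (b+1) (by omega)]
    have c2 : (if h : 1 ≤ a then X ⟨b, by omega⟩ ⟨a-1, by omega⟩ else 0) = y a (b+1) := by
      by_cases h : 1 ≤ a
      · rw [dif_pos h, hyin a (b+1) (by omega) (by omega) (by omega) (by omega)]
        congr 1 <;> exact Fin.ext (by simp)
      · rw [dif_neg h, hyout a (b+1) (by omega)]
    have c3 : X ⟨b, by omega⟩ ⟨a, by omega⟩ = y (a+1) (b+1) := by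
      rw [hyin (a+1) (b+1) (by omega) (by omega) (by omega) (by omega)]
      congr 1 <;> exact Fin.ext (by simp)
    have c4 : (if h : (b:ℕ)+1 < n then X ⟨b+1, h⟩ ⟨a, by omega⟩ else 0) = y (a+1) (b+2) := by
      by_cases h : b+1 < n
      · rw [dif_pos h, hyin (a+1) (b+2) (by omega) (by omega) (by omega) (by omega)]
        congr 1 <;> exact Fin.ext (by simp)
      · rw [dif_neg h, hyout (a+1) (b+2) (by omega)]
    have c5 : (if h : 1 ≤ b then X ⟨b-1, by omega⟩ ⟨a, by omega⟩ else 0) = y (a+1) b := by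
      by_cases h : 1 ≤ b
      · rw [dif_pos h, hyin (a+1) b (by omega) (by omega) (by omega) (by omega)]
        congr 1 <;> exact Fin.ext (by simp)
      · rw [dif_neg h, hyout (a+1) b (by omega)]
    have c6 : dd1 n ((⟨a, by omega⟩ : Fin n) : ℕ) = dv n (a+1) := dd1_dv n hn a (by omega)
    have c7 : dd1 n ((⟨b, by omega⟩ : Fin n) : ℕ) = dv n (b+1) := dd1_dv n hn b (by omega)
    rw [c1, c2, c3, c4, c5, c6, c7] at hc
    linarith [hc]
  have S : Sys n y := ⟨hyout, hd1, hd2, h11, hnn, hE⟩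
  have hz := all_zero S hn
  ext p q
  have h := hz ((q:ℕ)+1) ((p:ℕ)+1)
  rw [hyin ((q:ℕ)+1) ((p:ℕ)+1) (by omega) (by omega) (by omega) (by omega)] at h
  have e : X ⟨(p:ℕ)+1-1, by omega⟩ ⟨(q:ℕ)+1-1, by omega⟩ = X p q := by
    congr 1 <;> exact Fin.ext (by simp)
  rw [e] at h
  rw [h]
  simp

end NA

/-- for `n ≥ 3`, the double path with loops exactly at the endpoints
(1-based vertices `1` and `n`, i.e. 0-based indices `0` and `n-1`) allows but does not
require the nSSP, and the double path with loops exactly at the interior vertices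
(1-based `2,…,n-1`) does not require the nSSP. -/
theorem double_path_endpoint_loops {n : ℕ} (hn : 3 ≤ n) :
    (∃ A : Matrix (Fin n) (Fin n) ℝ,
        MemPattern (doublePathE n {i : Fin n | i.val = 0 ∨ i.val = n - 1}) A ∧ HasNSSP A) ∧
    (∃ A : Matrix (Fin n) (Fin n) ℝ,
        MemPattern (doublePathE n {i : Fin n | i.val = 0 ∨ i.val = n - 1}) A ∧ ¬ HasNSSP A) ∧
    (∃ A : Matrix (Fin n) (Fin n) ℝ,
        MemPattern (doublePathE n {i : Fin n | i.val ≠ 0 ∧ i.val ≠ n - 1}) A ∧ ¬ HasNSSP A) := by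
  exact ⟨NA.part1 n hn, NA.part2 n hn, NA.part3 n hn⟩
end

section
/- Let n ≥ 2 be an even integer. Then the double path P_{n,{2}} with a single loop at vertex 2 requires the nSSP: every matrix A ∈ M(P_{n,{2}}) has the nSSP. -/
open Matrix

namespace NSSPaux

def extM (n : ℕ) (M : Matrix (Fin n) (Fin n) ℝ) : ℤ → ℤ → ℝ :=
  fun i j =>
    if h : 0 ≤ i ∧ i < (n : ℤ) ∧ 0 ≤ j ∧ j < (n : ℤ) then
      M ⟨i.toNat, by omega⟩ ⟨j.toNat, by omega⟩
    else 0

lemma extM_zero {n : ℕ} (M : Matrix (Fin n) (Fin n) ℝ) {i j : ℤ}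
    (h : ¬(0 ≤ i ∧ i < (n : ℤ) ∧ 0 ≤ j ∧ j < (n : ℤ))) : extM n M i j = 0 :=
  dif_neg h

lemma extM_pos {n : ℕ} (M : Matrix (Fin n) (Fin n) ℝ) {i j : ℤ}
    (h : 0 ≤ i ∧ i < (n : ℤ) ∧ 0 ≤ j ∧ j < (n : ℤ)) :
    extM n M i j = M ⟨i.toNat, by omega⟩ ⟨j.toNat, by omega⟩ :=
  dif_pos h

lemma extM_apply {n : ℕ} (M : Matrix (Fin n) (Fin n) ℝ) (p q : Fin n) :
    extM n M ((p : ℕ) : ℤ) ((q : ℕ) : ℤ) = M p q := by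
  have hp := p.isLt
  have hq := q.isLt
  rw [extM_pos M ⟨by omega, by omega, by omega, by omega⟩]
  have h1 : (⟨(((p : ℕ) : ℤ)).toNat, by omega⟩ : Fin n) = p :=
    Fin.ext (show (((p : ℕ) : ℤ)).toNat = (p : ℕ) by omega)
  have h2 : (⟨(((q : ℕ) : ℤ)).toNat, by omega⟩ : Fin n) = q :=
    Fin.ext (show (((q : ℕ) : ℤ)).toNat = (q : ℕ) by omega)
  rw [h1, h2]

lemma extM_transpose {n : ℕ} (M : Matrix (Fin n) (Fin n) ℝ) (i j : ℤ) :
    extM n Mᵀ i j = extM n M j i := by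
  unfold extM
  by_cases h : 0 ≤ i ∧ i < (n : ℤ) ∧ 0 ≤ j ∧ j < (n : ℤ)
  · rw [dif_pos h, dif_pos (by tauto)]; rfl
  · rw [dif_neg h, dif_neg (by tauto)]

lemma sumIf {n : ℕ} (c : ℤ) (v : ℝ) :
    (∑ k : Fin n, if ((k : ℕ) : ℤ) = c then v else 0)
      = if 0 ≤ c ∧ c < (n : ℤ) then v else 0 := by
  by_cases h : 0 ≤ c ∧ c < (n : ℤ)
  · rw [if_pos h, Finset.sum_eq_single (⟨c.toNat, by omega⟩ : Fin n)]
    · rw [if_pos (show ((c.toNat : ℕ) : ℤ) = c by omega)]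
    · intro k _ hk
      rw [if_neg (fun hc => hk (Fin.ext (show (k : ℕ) = c.toNat by omega)))]
    · intro h'; exact absurd (Finset.mem_univ _) h'
  · rw [if_neg h]
    apply Finset.sum_eq_zero
    intro k _
    have := k.isLt
    rw [if_neg (by omega)]

lemma row_sum {n : ℕ} (hn : 2 ≤ n) (A : Matrix (Fin n) (Fin n) ℝ)
    (hAzero : ∀ p q : Fin n,
      ¬((p : ℕ) + 1 = (q : ℕ) ∨ (q : ℕ) + 1 = (p : ℕ) ∨ (p = q ∧ (p : ℕ) = 1)) → A p q = 0)
    (i : ℤ) (hi0 : 0 ≤ i) (hi1 : i < (n : ℤ)) (G : ℤ → ℝ) :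
    (∑ k : Fin n, A ⟨i.toNat, by omega⟩ k * G ((k : ℕ) : ℤ))
      = extM n A i (i+1) * G (i+1) + extM n A (i-1+1) (i-1) * G (i-1)
        + (if i = 1 then extM n A 1 1 else 0) * G 1 := by
  have key : ∀ k : Fin n, A ⟨i.toNat, by omega⟩ k * G ((k : ℕ) : ℤ) =
      (if ((k : ℕ) : ℤ) = i + 1 then extM n A i (i+1) * G (i+1) else 0)
      + (if ((k : ℕ) : ℤ) = i - 1 then extM n A (i-1+1) (i-1) * G (i-1) else 0)
      + (if i = 1 ∧ ((k : ℕ) : ℤ) = 1 then extM n A 1 1 * G 1 else 0) := by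
    intro k
    have hk := k.isLt
    by_cases h1 : ((k : ℕ) : ℤ) = i + 1
    · have hAk : A ⟨i.toNat, by omega⟩ k = extM n A i (i+1) := by
        rw [extM_pos A ⟨hi0, hi1, by omega, by omega⟩]
        congr 1
        exact Fin.ext (show (k : ℕ) = (i+1).toNat by omega)
      rw [if_pos h1, if_neg (show ¬((k : ℕ) : ℤ) = i - 1 by omega),
        if_neg (show ¬(i = 1 ∧ ((k : ℕ) : ℤ) = 1) by omega), add_zero, add_zero, ← hAk,
        show G ((k : ℕ) : ℤ) = G (i+1) from by rw [h1]]
    · by_cases h2 : ((k : ℕ) : ℤ) = i - 1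
      · have hAk : A ⟨i.toNat, by omega⟩ k = extM n A (i-1+1) (i-1) := by
          rw [extM_pos A ⟨by omega, by omega, by omega, by omega⟩]
          congr 1
          · exact Fin.ext (show i.toNat = (i-1+1).toNat by omega)
          · exact Fin.ext (show (k : ℕ) = (i-1).toNat by omega)
        rw [if_neg h1, if_pos h2,
          if_neg (show ¬(i = 1 ∧ ((k : ℕ) : ℤ) = 1) by omega), add_zero, zero_add, ← hAk,
          show G ((k : ℕ) : ℤ) = G (i-1) from by rw [h2]]
      · by_cases h3 : i = 1 ∧ ((k : ℕ) : ℤ) = 1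
        · have hAk : A ⟨i.toNat, by omega⟩ k = extM n A 1 1 := by
            rw [extM_pos A ⟨by omega, by omega, by omega, by omega⟩]
            congr 1
            · exact Fin.ext (show i.toNat = (1:ℤ).toNat by omega)
            · exact Fin.ext (show (k : ℕ) = (1:ℤ).toNat by omega)
          rw [if_neg h1, if_neg h2, if_pos h3, zero_add, zero_add, ← hAk,
            show G ((k : ℕ) : ℤ) = G 1 from by rw [h3.2]]
        · rw [if_neg h1, if_neg h2, if_neg h3, add_zero, add_zero,
            hAzero _ _ ?_, zero_mul]
          intro harc
          rcases harc with h | h | ⟨hpq, hp1⟩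
          · exact h1 (by have h' : i.toNat + 1 = (k : ℕ) := h; omega)
          · exact h2 (by have h' : (k : ℕ) + 1 = i.toNat := h; omega)
          · exact h3 (by
              have ha' : i.toNat = (k : ℕ) := congrArg Fin.val hpq
              have hb' : i.toNat = 1 := hp1
              omega)
  rw [Finset.sum_congr rfl (fun k _ => key k), Finset.sum_add_distrib,
    Finset.sum_add_distrib]
  have e1 : (∑ k : Fin n, if ((k : ℕ) : ℤ) = i + 1 then extM n A i (i+1) * G (i+1) else 0)
      = extM n A i (i+1) * G (i+1) := by
    rw [sumIf]
    by_cases h : 0 ≤ i + 1 ∧ i + 1 < (n : ℤ)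
    · rw [if_pos h]
    · rw [if_neg h, extM_zero _ (by omega), zero_mul]
  have e2 : (∑ k : Fin n, if ((k : ℕ) : ℤ) = i - 1 then extM n A (i-1+1) (i-1) * G (i-1) else 0)
      = extM n A (i-1+1) (i-1) * G (i-1) := by
    rw [sumIf]
    by_cases h : 0 ≤ i - 1 ∧ i - 1 < (n : ℤ)
    · rw [if_pos h]
    · rw [if_neg h, extM_zero _ (by omega), zero_mul]
  have e3 : (∑ k : Fin n, if i = 1 ∧ ((k : ℕ) : ℤ) = 1 then extM n A 1 1 * G 1 else 0)
      = (if i = 1 then extM n A 1 1 else 0) * G 1 := by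
    by_cases hi : i = 1
    · have : ∀ k : Fin n, (if i = 1 ∧ ((k : ℕ) : ℤ) = 1 then extM n A 1 1 * G 1 else 0)
          = (if ((k : ℕ) : ℤ) = 1 then extM n A 1 1 * G 1 else 0) := by
        intro k
        by_cases hk : ((k : ℕ) : ℤ) = 1
        · rw [if_pos ⟨hi, hk⟩, if_pos hk]
        · rw [if_neg (fun hc => hk hc.2), if_neg hk]
      rw [Finset.sum_congr rfl (fun k _ => this k), sumIf, if_pos (by omega), if_pos hi]
    · rw [if_neg hi, zero_mul]
      apply Finset.sum_eq_zero
      intro k _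
      rw [if_neg (fun hc => hi hc.1)]
  rw [e1, e2, e3]

lemma stage1 (n : ℤ) (a b : ℤ → ℝ) (d : ℝ) (y : ℤ → ℤ → ℝ)
    (hb : ∀ i, 0 ≤ i → i + 1 < n → b i ≠ 0)
    (hy0 : ∀ i j, ¬(0 ≤ i ∧ i < n ∧ 0 ≤ j ∧ j < n) → y i j = 0)
    (hsup : ∀ i, y i (i+1) = 0)
    (E : ∀ i j, a i * y (i+1) j + b (i-1) * y (i-1) j + (if i = 1 then d else 0) * y 1 j
      = a (j-1) * y i (j-1) + b j * y i (j+1) + (if j = 1 then d else 0) * y i 1) :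
    ∀ m : ℕ, ∀ i j : ℤ, i + 2*(m:ℤ) + 1 = j → y i j = 0 := by
  intro m
  induction m with
  | zero =>
    intro i j hij
    rw [show j = i + 1 by omega]
    exact hsup i
  | succ m IH =>
    have inner : ∀ t : ℕ, ∀ i j : ℤ, 1 ≤ i → i + 2*(m:ℤ) + 3 = j → (n:ℤ) ≤ j + t →
        y i j = 0 := by
      intro t
      induction t with
      | zero =>
        intro i j hi hij hnj
        exact hy0 i j (by omega)
      | succ t IHt =>
        intro i j hi hij hnj
        by_cases hjr : n ≤ j
        · exact hy0 i j (by omega)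
        · have h1 : y (i+1+1) j = 0 := IH (i+1+1) j (by omega)
          have h2 : y (i+1) (j-1) = 0 := IH (i+1) (j-1) (by omega)
          have h3 : y (i+1) (j+1) = 0 := IHt (i+1) (j+1) (by omega) (by omega) (by omega)
          have hE := E (i+1) j
          rw [h1, h2, h3, if_neg (show ¬(i+1 = 1) by omega),
            if_neg (show ¬(j = 1) by omega)] at hE
          simp only [mul_zero, zero_mul, add_zero, zero_add] at hE
          rw [show i+1-1 = i by ring] at hE
          rcases mul_eq_zero.mp hE with h | h
          · exact absurd h (hb i (by omega) (by omega))
          · exact h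
    intro i j hij
    by_cases hjr : n ≤ j
    · exact hy0 i j (by omega)
    rcases lt_trichotomy i 0 with hi | hi | hi
    · exact hy0 i j (by omega)
    · subst hi
      have h1 : y (0+1) (j-1) = 0 := IH (0+1) (j-1) (by omega)
      have h2 : y (0-1) (j-1) = 0 := hy0 _ _ (by omega)
      have h3 : y 0 (j-1-1) = 0 := IH 0 (j-1-1) (by omega)
      have hE := E 0 (j-1)
      rw [h1, h2, h3, if_neg (show ¬((0:ℤ) = 1) by omega),
        if_neg (show ¬(j-1 = 1) by omega)] at hE
      simp only [mul_zero, zero_mul, add_zero, zero_add] at hE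
      rw [show j-1+1 = j by ring] at hE
      rcases mul_eq_zero.mp hE.symm with h | h
      · exact absurd h (hb (j-1) (by omega) (by omega))
      · exact h
    · exact inner n.toNat i j hi (by omega) (by omega)

lemma stage2 (n : ℤ) (a b : ℤ → ℝ) (d : ℝ) (y : ℤ → ℤ → ℝ)
    (hd : d ≠ 0)
    (hodd : ∀ i j : ℤ, Odd (j - i) → y i j = 0)
    (hy11 : y 1 1 = 0)
    (E : ∀ i j, a i * y (i+1) j + b (i-1) * y (i-1) j + (if i = 1 then d else 0) * y 1 j
      = a (j-1) * y i (j-1) + b j * y i (j+1) + (if j = 1 then d else 0) * y i 1) :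
    ∀ j, y 1 j = 0 := by
  intro j
  rcases Int.even_or_odd (j - 1) with he | ho
  · obtain ⟨c, hc⟩ := he
    have h1 : y (1+1) j = 0 := hodd _ _ ⟨c-1, by omega⟩
    have h2 : y (1-1) j = 0 := hodd _ _ ⟨c, by omega⟩
    have h3 : y 1 (j-1) = 0 := hodd _ _ ⟨c-1, by omega⟩
    have h4 : y 1 (j+1) = 0 := hodd _ _ ⟨c, by omega⟩
    have hE := E 1 j
    rw [h1, h2, h3, h4, if_pos rfl, hy11] at hE
    simp only [mul_zero, zero_mul, add_zero, zero_add] at hE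
    rcases mul_eq_zero.mp hE with h | h
    · exact absurd h hd
    · exact h
  · exact hodd _ _ ho

lemma keyA (n : ℤ) (hn : 2 ≤ n) (heven : Even n) (a b : ℤ → ℝ) (d : ℝ) (y : ℤ → ℤ → ℝ)
    (ha : ∀ i, 0 ≤ i → i + 1 < n → a i ≠ 0)
    (hb : ∀ i, 0 ≤ i → i + 1 < n → b i ≠ 0)
    (hd : d ≠ 0)
    (hy0 : ∀ i j, ¬(0 ≤ i ∧ i < n ∧ 0 ≤ j ∧ j < n) → y i j = 0)
    (hsup : ∀ i, y i (i+1) = 0)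
    (hsub : ∀ i, y (i+1) i = 0)
    (hy11 : y 1 1 = 0)
    (E : ∀ i j, a i * y (i+1) j + b (i-1) * y (i-1) j + (if i = 1 then d else 0) * y 1 j
      = a (j-1) * y i (j-1) + b j * y i (j+1) + (if j = 1 then d else 0) * y i 1) :
    ∀ i j, y i j = 0 := by
  have hoddp : ∀ m : ℕ, ∀ i j : ℤ, i + 2*(m:ℤ) + 1 = j → y i j = 0 :=
    stage1 n a b d y hb hy0 hsup E
  have hoddn : ∀ m : ℕ, ∀ i j : ℤ, i + 2*(m:ℤ) + 1 = j → y j i = 0 :=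
    stage1 n b a d (fun i j => y j i) ha (fun i j h => hy0 j i (by tauto)) hsub
      (fun i j => by have h := E j i; linarith)
  have hodd : ∀ i j : ℤ, Odd (j - i) → y i j = 0 := by
    intro i j hij
    obtain ⟨c, hc⟩ := hij
    rcases le_or_gt 0 c with h | h
    · exact hoddp c.toNat i j (by omega)
    · exact hoddn (-1-c).toNat j i (by omega)
  have hrow1 : ∀ j, y 1 j = 0 := stage2 n a b d y hd hodd hy11 E
  have hy01 : y 0 1 = 0 := hodd 0 1 ⟨0, by omega⟩
  have row0aux : ∀ t : ℕ, ∀ j : ℤ, Even j → n ≤ j + 2*t + 1 → y 0 j = 0 := by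
    intro t
    induction t with
    | zero =>
      intro j hje hj
      obtain ⟨c, hc⟩ := hje
      obtain ⟨e, he⟩ := heven
      exact hy0 0 j (by omega)
    | succ t IHt =>
      intro j hje hj
      by_cases hjn : n ≤ j
      · exact hy0 0 j (by omega)
      by_cases hj0 : j < 0
      · exact hy0 0 j (by omega)
      obtain ⟨c, hc⟩ := hje
      have h1 : y (0+1) (j+1) = 0 := by rw [zero_add]; exact hrow1 (j+1)
      have h2 : y (0-1) (j+1) = 0 := hy0 _ _ (by omega)
      have h4 : y 0 (j+1+1) = 0 := IHt (j+1+1) ⟨c+1, by omega⟩ (by omega)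
      have hE := E 0 (j+1)
      rw [h1, h2, h4, hy01, if_neg (show ¬((0:ℤ) = 1) by omega)] at hE
      simp only [mul_zero, zero_mul, add_zero, zero_add] at hE
      rw [add_sub_cancel_right] at hE
      rcases mul_eq_zero.mp hE.symm with h | h
      · obtain ⟨e, he⟩ := heven
        exact absurd h (ha j (by omega) (by omega))
      · exact h
  have hrow0 : ∀ j, y 0 j = 0 := by
    intro j
    rcases Int.even_or_odd j with he | ho
    · by_cases hj0 : j < 0
      · exact hy0 0 j (by omega)
      · exact row0aux n.toNat j he (by omega)
    · exact hodd 0 j (by obtain ⟨c, hc⟩ := ho; exact ⟨c, by omega⟩)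
  have rows : ∀ t : ℕ, (∀ j, y (t:ℤ) j = 0) ∧ (∀ j, y ((t:ℤ)+1) j = 0) := by
    intro t
    induction t with
    | zero =>
      constructor
      · intro j
        have := hrow0 j
        simpa using this
      · intro j
        have := hrow1 j
        simpa using this
    | succ t IHt =>
      obtain ⟨hr0, hr1⟩ := IHt
      have hnext : ∀ j, y ((t:ℤ)+1+1) j = 0 := by
        intro j
        by_cases hsn : n ≤ (t:ℤ) + 2
        · exact hy0 _ _ (by omega)
        · have hE := E ((t:ℤ)+1) j
          have h0 : y ((t:ℤ)+1-1) j = 0 := by rw [add_sub_cancel_right]; exact hr0 j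
          rw [h0, hr1 (j-1), hr1 (j+1), hr1 1, hrow1 j] at hE
          simp only [mul_zero, zero_mul, add_zero, zero_add] at hE
          rcases mul_eq_zero.mp hE with h | h
          · exact absurd h (ha ((t:ℤ)+1) (by omega) (by omega))
          · exact h
      constructor
      · intro j
        have := hr1 j
        rw [show ((t+1:ℕ):ℤ) = (t:ℤ)+1 by push_cast; ring]
        exact this
      · intro j
        rw [show ((t+1:ℕ):ℤ)+1 = (t:ℤ)+1+1 by push_cast; ring]
        exact hnext j
  intro i j
  rcases lt_or_ge i 0 with h | h
  · exact hy0 i j (by omega)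
  · have := (rows i.toNat).1 j
    rwa [Int.toNat_of_nonneg h] at this

end NSSPaux

open NSSPaux in
/-- for even `n ≥ 2`, the double path with a single loop at the 1-based
vertex `2` (0-based index `1`) requires the nSSP. -/
theorem double_path_loop_at_two_requires_nSSP {n : ℕ} (hn : 2 ≤ n) (heven : Even n) :
    RequiresNSSP (doublePathE n {i : Fin n | i.val = 1}) := by
  intro A hA X hX1 hX2
  have hAne : ∀ p q : Fin n,
      ((p : ℕ) + 1 = (q : ℕ) ∨ (q : ℕ) + 1 = (p : ℕ) ∨ (p = q ∧ (p : ℕ) = 1)) → A p q ≠ 0 :=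
    fun p q h => (hA p q).mpr h
  have hAzero : ∀ p q : Fin n,
      ¬((p : ℕ) + 1 = (q : ℕ) ∨ (q : ℕ) + 1 = (p : ℕ) ∨ (p = q ∧ (p : ℕ) = 1)) → A p q = 0 := by
    intro p q h
    by_contra hne
    exact h ((hA p q).mp hne)
  have hXzero : ∀ p q : Fin n,
      ((p : ℕ) + 1 = (q : ℕ) ∨ (q : ℕ) + 1 = (p : ℕ) ∨ (p = q ∧ (p : ℕ) = 1)) → X p q = 0 := by
    intro p q h
    rcases mul_eq_zero.mp (hX1 p q) with h' | h'
    · exact absurd h' (hAne p q h)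
    · exact h'
  have hAzT : ∀ p q : Fin n,
      ¬((p : ℕ) + 1 = (q : ℕ) ∨ (q : ℕ) + 1 = (p : ℕ) ∨ (p = q ∧ (p : ℕ) = 1)) → Aᵀ p q = 0 := by
    intro p q h
    show A q p = 0
    apply hAzero q p
    intro hc
    rcases hc with h1 | h1 | ⟨h1, h2⟩
    · exact h (Or.inr (Or.inl h1))
    · exact h (Or.inl h1)
    · exact h (Or.inr (Or.inr ⟨h1.symm, h1 ▸ h2⟩))
  have hAX : A * Xᵀ = Xᵀ * A := sub_eq_zero.mp hX2
  -- the master equation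
  have hE : ∀ i j : ℤ,
      extM n A i (i+1) * extM n Xᵀ (i+1) j + extM n A (i-1+1) (i-1) * extM n Xᵀ (i-1) j
        + (if i = 1 then extM n A 1 1 else 0) * extM n Xᵀ 1 j
      = extM n A (j-1) (j-1+1) * extM n Xᵀ i (j-1) + extM n A (j+1) j * extM n Xᵀ i (j+1)
        + (if j = 1 then extM n A 1 1 else 0) * extM n Xᵀ i 1 := by
    intro i j
    by_cases hir : 0 ≤ i ∧ i < (n : ℤ)
    · by_cases hjr : 0 ≤ j ∧ j < (n : ℤ)
      · -- in range
        obtain ⟨p, hp⟩ : ∃ p : Fin n, ((p : ℕ) : ℤ) = i :=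
          ⟨⟨i.toNat, by omega⟩, by show ((i.toNat : ℕ) : ℤ) = i; omega⟩
        obtain ⟨q, hq⟩ : ∃ q : Fin n, ((q : ℕ) : ℤ) = j :=
          ⟨⟨j.toNat, by omega⟩, by show ((j.toNat : ℕ) : ℤ) = j; omega⟩
        subst hp
        subst hq
        have hpn := p.isLt
        have hqn := q.isLt
        have hpp : (⟨(((p : ℕ) : ℤ)).toNat, by omega⟩ : Fin n) = p :=
          Fin.ext (show (((p : ℕ) : ℤ)).toNat = (p : ℕ) by omega)
        have hqq : (⟨(((q : ℕ) : ℤ)).toNat, by omega⟩ : Fin n) = q :=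
          Fin.ext (show (((q : ℕ) : ℤ)).toNat = (q : ℕ) by omega)
        have hrowA := row_sum hn A hAzero ((p : ℕ) : ℤ) (by omega) (by omega)
          (fun c => extM n Xᵀ c ((q : ℕ) : ℤ))
        rw [hpp] at hrowA
        have hL : (A * Xᵀ) p q
            = extM n A ((p:ℕ):ℤ) (((p:ℕ):ℤ)+1) * extM n Xᵀ (((p:ℕ):ℤ)+1) ((q:ℕ):ℤ)
              + extM n A (((p:ℕ):ℤ)-1+1) (((p:ℕ):ℤ)-1) * extM n Xᵀ (((p:ℕ):ℤ)-1) ((q:ℕ):ℤ)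
              + (if ((p:ℕ):ℤ) = 1 then extM n A 1 1 else 0) * extM n Xᵀ 1 ((q:ℕ):ℤ) := by
          rw [Matrix.mul_apply, ← hrowA]
          refine Finset.sum_congr rfl fun k _ => ?_
          congr 1
          exact (extM_apply Xᵀ k q).symm
        have hrowB := row_sum hn Aᵀ hAzT ((q : ℕ) : ℤ) (by omega) (by omega)
          (fun c => extM n Xᵀ ((p : ℕ) : ℤ) c)
        rw [hqq] at hrowB
        have hR : (Xᵀ * A) p q
            = extM n Aᵀ ((q:ℕ):ℤ) (((q:ℕ):ℤ)+1) * extM n Xᵀ ((p:ℕ):ℤ) (((q:ℕ):ℤ)+1)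
              + extM n Aᵀ (((q:ℕ):ℤ)-1+1) (((q:ℕ):ℤ)-1) * extM n Xᵀ ((p:ℕ):ℤ) (((q:ℕ):ℤ)-1)
              + (if ((q:ℕ):ℤ) = 1 then extM n Aᵀ 1 1 else 0) * extM n Xᵀ ((p:ℕ):ℤ) 1 := by
          rw [Matrix.mul_apply, ← hrowB]
          refine Finset.sum_congr rfl fun k _ => ?_
          rw [mul_comm]
          congr 1
          exact (extM_apply Xᵀ p k).symm
        rw [extM_transpose A ((q:ℕ):ℤ) (((q:ℕ):ℤ)+1),
          extM_transpose A (((q:ℕ):ℤ)-1+1) (((q:ℕ):ℤ)-1),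
          extM_transpose A 1 1] at hR
        have hpq := congrFun (congrFun hAX p) q
        rw [hL, hR] at hpq
        linarith [hpq]
      · -- j out of range
        have z1 : extM n Xᵀ (i+1) j = 0 := extM_zero _ (by omega)
        have z2 : extM n Xᵀ (i-1) j = 0 := extM_zero _ (by omega)
        have z3 : extM n Xᵀ 1 j = 0 := extM_zero _ (by omega)
        have z4 : extM n A (j-1) (j-1+1) = 0 := extM_zero _ (by omega)
        have z5 : extM n A (j+1) j = 0 := extM_zero _ (by omega)
        rw [z1, z2, z3, z4, z5, if_neg (show ¬(j = 1) by omega)]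
        ring
    · -- i out of range
      have z1 : extM n A i (i+1) = 0 := extM_zero _ (by omega)
      have z2 : extM n A (i-1+1) (i-1) = 0 := extM_zero _ (by omega)
      have z3 : extM n Xᵀ i (j-1) = 0 := extM_zero _ (by omega)
      have z4 : extM n Xᵀ i (j+1) = 0 := extM_zero _ (by omega)
      have z5 : extM n Xᵀ i 1 = 0 := extM_zero _ (by omega)
      rw [z1, z2, z3, z4, z5, if_neg (show ¬(i = 1) by omega)]
      ring
  have key := keyA (n : ℤ) (by omega) ((Int.even_coe_nat n).mpr heven)
    (fun i => extM n A i (i+1)) (fun i => extM n A (i+1) i) (extM n A 1 1)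
    (fun i j => extM n Xᵀ i j)
    (by
      intro i h0 h1
      show extM n A i (i+1) ≠ 0
      rw [extM_pos A ⟨h0, by omega, by omega, h1⟩]
      exact hAne _ _ (Or.inl (show i.toNat + 1 = (i+1).toNat by omega)))
    (by
      intro i h0 h1
      show extM n A (i+1) i ≠ 0
      rw [extM_pos A ⟨by omega, h1, h0, by omega⟩]
      exact hAne _ _ (Or.inr (Or.inl (show i.toNat + 1 = (i+1).toNat by omega))))
    (by
      show extM n A 1 1 ≠ 0
      rw [extM_pos A ⟨by omega, by omega, by omega, by omega⟩]
      exact hAne _ _ (Or.inr (Or.inr ⟨rfl, show (1:ℤ).toNat = 1 by omega⟩)))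
    (fun i j h => extM_zero _ h)
    (by
      intro i
      show extM n Xᵀ i (i+1) = 0
      by_cases h : 0 ≤ i ∧ i < (n : ℤ) ∧ 0 ≤ i+1 ∧ i+1 < (n : ℤ)
      · rw [extM_pos Xᵀ h, Matrix.transpose_apply]
        exact hXzero _ _ (Or.inr (Or.inl (show i.toNat + 1 = (i+1).toNat by omega)))
      · exact extM_zero _ h)
    (by
      intro i
      show extM n Xᵀ (i+1) i = 0
      by_cases h : 0 ≤ i+1 ∧ i+1 < (n : ℤ) ∧ 0 ≤ i ∧ i < (n : ℤ)
      · rw [extM_pos Xᵀ h, Matrix.transpose_apply]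
        exact hXzero _ _ (Or.inl (show i.toNat + 1 = (i+1).toNat by omega))
      · exact extM_zero _ h)
    (by
      show extM n Xᵀ 1 1 = 0
      rw [extM_pos Xᵀ ⟨by omega, by omega, by omega, by omega⟩, Matrix.transpose_apply]
      exact hXzero _ _ (Or.inr (Or.inr ⟨rfl, show (1:ℤ).toNat = 1 by omega⟩)))
    hE
  ext p q
  have hk : extM n Xᵀ ((q : ℕ) : ℤ) ((p : ℕ) : ℤ) = 0 := key ((q : ℕ) : ℤ) ((p : ℕ) : ℤ)
  rw [extM_apply Xᵀ q p, Matrix.transpose_apply] at hk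
  simpa using hk
end

section
/- Let n ≥ 3 be an odd integer and let L = {(n+1)/2}, i.e., the only loop is at the central vertex. Then the double path P_{n,L} does not require the nSSP: there exists a matrix A ∈ M(P_{n,L}) (for instance the 0-1 adjacency matrix of P_{n,L}) that does not have the nSSP. -/
open Matrix

/-- for odd `n ≥ 3`, the double path with a single loop at the central
vertex (1-based `(n+1)/2`, i.e. the 0-based index `i` with `2 * i + 1 = n`) does not
require the nSSP. -/
theorem double_path_central_loop_not_require_nSSP {n : ℕ} (hn : 3 ≤ n) (hodd : Odd n) :
    ∃ A : Matrix (Fin n) (Fin n) ℝ,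
      MemPattern (doublePathE n {i : Fin n | 2 * i.val + 1 = n}) A ∧ ¬ HasNSSP A := by
  classical
  obtain ⟨m, hm⟩ := hodd
  set A : Matrix (Fin n) (Fin n) ℝ := fun i j =>
    if (i.val + 1 = j.val ∨ j.val + 1 = i.val ∨ (i = j ∧ 2 * i.val + 1 = n)) then 1 else 0
    with hA
  refine ⟨A, ?_, ?_⟩
  · intro i j
    by_cases h : (i.val + 1 = j.val ∨ j.val + 1 = i.val ∨ (i = j ∧ 2 * i.val + 1 = n)) <;>
      simp [hA, h, doublePathE]
  · intro hssp
    set X : Matrix (Fin n) (Fin n) ℝ := fun i j =>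
      (if i.val + j.val + 1 = n then (1 : ℝ) else 0) - (if i = j then 1 else 0) with hX
    have h1 : ∀ i j, A i j * X i j = 0 := by
      intro i j
      by_cases h : (i.val + 1 = j.val ∨ j.val + 1 = i.val ∨ (i = j ∧ 2 * i.val + 1 = n))
      · have hX0 : X i j = 0 := by
          rcases h with h | h | ⟨h, h2⟩
          · have hne : ¬(i.val + j.val + 1 = n) := by omega
            have hne2 : i ≠ j := by
              intro he; rw [he] at h; omega
            simp [hX, hne, hne2]
          · have hne : ¬(i.val + j.val + 1 = n) := by omega
            have hne2 : i ≠ j := by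
              intro he; rw [he] at h; omega
            simp [hX, hne, hne2]
          · subst h
            have : i.val + i.val + 1 = n := by omega
            simp [hX, this]
        rw [hX0, mul_zero]
      · simp [hA, h]
    have hXrw : ∀ j k : Fin n, X j k
        = (if k = j.rev then (1 : ℝ) else 0) - (if k = j then 1 else 0) := by
      intro j k
      simp only [hX]
      congr 1
      · refine if_congr ?_ rfl rfl
        rw [Fin.ext_iff, Fin.val_rev]
        omega
      · exact if_congr eq_comm rfl rfl
    have key1 : ∀ i j : Fin n, (∑ k, A i k * X j k) = A i (j.rev) - A i j := by
      intro i j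
      simp only [hXrw, mul_sub]
      rw [Finset.sum_sub_distrib]
      congr 1 <;> simp [mul_ite, mul_one, mul_zero]
    have key2 : ∀ i j : Fin n, (∑ k, X k i * A k j) = A (i.rev) j - A i j := by
      intro i j
      have hXrw2 : ∀ k : Fin n, X k i
          = (if k = i.rev then (1 : ℝ) else 0) - (if k = i then 1 else 0) := by
        intro k
        simp only [hX]
        congr 1
        refine if_congr ?_ rfl rfl
        rw [Fin.ext_iff, Fin.val_rev]
        omega
      simp only [hXrw2, sub_mul]
      rw [Finset.sum_sub_distrib]
      congr 1 <;> simp [ite_mul, one_mul, zero_mul]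
    have hrev : ∀ i j : Fin n, A i (j.rev) = A (i.rev) j := by
      intro i j
      have hi := i.isLt
      have hj := j.isLt
      simp only [hA]
      refine if_congr ?_ rfl rfl
      simp only [Fin.ext_iff, Fin.val_rev]
      omega
    have h2 : A * Xᵀ - Xᵀ * A = 0 := by
      ext i j
      simp only [Matrix.sub_apply, Matrix.mul_apply, Matrix.transpose_apply,
        Matrix.zero_apply]
      rw [sub_eq_zero]
      calc (∑ k, A i k * X j k) = A i (j.rev) - A i j := key1 i j
        _ = A (i.rev) j - A i j := by rw [hrev]
        _ = ∑ k, X k i * A k j := (key2 i j).symm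
    have hz := hssp X h1 h2
    have h00 := congrFun (congrFun hz ⟨0, by omega⟩) ⟨0, by omega⟩
    have : ¬(0 + 0 + 1 = n) := by omega
    simp [hX, this] at h00
end

section
/- Let n ≥ 3 be an odd integer and let L ⊆ {2i : 1 ≤ i ≤ (n−1)/2} (so every looped vertex has an even index). Then the double path P_{n,L} does not allow the nSSP: no matrix A ∈ M(P_{n,L}) has the nSSP. -/
open Matrix

noncomputable def kseq (a b : ℕ → ℝ) : ℕ → ℝ
  | 0 => 1
  | k + 1 => -(b k * kseq a b k) / a k

lemma exists_kernel_vec {n : ℕ} (hn : 3 ≤ n) (hodd : Odd n)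
    (L : Set (Fin n)) (hL : ∀ i ∈ L, i.val % 2 = 1)
    (B : Matrix (Fin n) (Fin n) ℝ) (hB : MemPattern (doublePathE n L) B) :
    ∃ v : Fin n → ℝ, (∀ i : Fin n, i.val = 0 → v i = 1) ∧
      (∀ i : Fin n, i.val % 2 = 1 → v i = 0) ∧ B *ᵥ v = 0 := by
  obtain ⟨m, hm⟩ := hodd
  set a : ℕ → ℝ := fun k =>
    if h : 2 * k + 2 < n then B ⟨2 * k + 1, by omega⟩ ⟨2 * k + 2, h⟩ else 1 with ha_def
  set b : ℕ → ℝ := fun k =>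
    if h : 2 * k + 2 < n then B ⟨2 * k + 1, by omega⟩ ⟨2 * k, by omega⟩ else 0 with hb_def
  set s : ℕ → ℝ := kseq a b with hs_def
  have hterm : ∀ i j : Fin n, i.val % 2 = 0 ∨ (i.val % 2 = 1 ∧ j.val ≠ i.val - 1 ∧ j.val ≠ i.val + 1) →
      B i j * (if j.val % 2 = 0 then s (j.val / 2) else 0) = 0 := by
    intro i j hcase
    rcases Nat.mod_two_eq_zero_or_one j.val with hje | hjo
    · have hBij : B i j = 0 := by
        by_contra h
        have hmem := (hB i j).mp h
        simp only [doublePathE, Set.mem_setOf_eq] at hmem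
        rcases hmem with h1 | h2 | ⟨h3, h4⟩
        · rcases hcase with hc | ⟨hc1, hc2, hc3⟩ <;> omega
        · rcases hcase with hc | ⟨hc1, hc2, hc3⟩ <;> omega
        · have := hL i h4
          have : j.val = i.val := by rw [h3]
          rcases hcase with hc | ⟨hc1, hc2, hc3⟩ <;> omega
      simp [hBij]
    · have : ¬ (j.val % 2 = 0) := by omega
      simp [this]
  refine ⟨fun i => if i.val % 2 = 0 then s (i.val / 2) else 0, ?_, ?_, ?_⟩
  · intro i hi
    simp [hi, hs_def, kseq]
  · intro i hi
    simp [hi]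
  · funext i
    simp only [Matrix.mulVec, dotProduct, Pi.zero_apply]
    rcases Nat.mod_two_eq_zero_or_one i.val with he | ho
    · exact Finset.sum_eq_zero fun j _ => hterm i j (Or.inl he)
    · -- i odd
      set k := i.val / 2 with hk_def
      have hk : i.val = 2 * k + 1 := by omega
      have h2k2 : 2 * k + 2 < n := by omega
      set j1 : Fin n := ⟨2 * k, by omega⟩ with hj1
      set j2 : Fin n := ⟨2 * k + 2, h2k2⟩ with hj2
      have hne : j1 ≠ j2 := by simp [hj1, hj2, Fin.ext_iff]
      have hsub : ∑ j, B i j * (if j.val % 2 = 0 then s (j.val / 2) else 0)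
          = ∑ j ∈ ({j1, j2} : Finset (Fin n)), B i j * (if j.val % 2 = 0 then s (j.val / 2) else 0) := by
        refine (Finset.sum_subset (Finset.subset_univ _) ?_).symm
        intro j _ hj
        simp only [Finset.mem_insert, Finset.mem_singleton, not_or] at hj
        refine hterm i j (Or.inr ⟨ho, ?_, ?_⟩)
        · intro hval
          exact hj.1 (Fin.ext (by simp only [hj1]; omega))
        · intro hval
          exact hj.2 (Fin.ext (by simp only [hj2]; omega))
      rw [hsub, Finset.sum_pair hne]
      have hv1 : ((j1.val : ℕ) % 2 = 0) := by simp [hj1]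
      have hv2 : ((j2.val : ℕ) % 2 = 0) := by simp [hj2]
      have ha : a k = B i j2 := by
        rw [ha_def]; simp only [dif_pos h2k2]
        congr 1
        exact Fin.ext (by simp; omega)
      have hb : b k = B i j1 := by
        rw [hb_def]; simp only [dif_pos h2k2]
        congr 1
        exact Fin.ext (by simp; omega)
      have hane : a k ≠ 0 := by
        rw [ha, hB]
        simp only [doublePathE, Set.mem_setOf_eq]
        left; simp [hj2]; omega
      have hd1 : j1.val / 2 = k := by simp [hj1]
      have hd2 : j2.val / 2 = k + 1 := by simp only [hj2]; omega
      rw [if_pos hv1, if_pos hv2, hd1, hd2, ← ha, ← hb]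
      have hrec : s (k + 1) = -(b k * s k) / a k := by rw [hs_def]; rfl
      rw [hrec]
      field_simp
      ring

/-- for odd `n ≥ 3`, if every looped vertex of the double path has an even
1-based index (equivalently, odd 0-based index), then `P_{n,L}` does not allow the nSSP. -/
theorem double_path_even_loops_not_allow_nSSP {n : ℕ} (hn : 3 ≤ n) (hodd : Odd n)
    (L : Set (Fin n)) (hL : ∀ i ∈ L, i.val % 2 = 1) :
    ∀ A : Matrix (Fin n) (Fin n) ℝ, MemPattern (doublePathE n L) A → ¬ HasNSSP A := by
  intro A hA hN
  have hsym : MemPattern (doublePathE n L) Aᵀ := by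
    intro i j
    rw [Matrix.transpose_apply, hA j i]
    simp only [doublePathE, Set.mem_setOf_eq]
    constructor <;> rintro (h | h | ⟨h, hm⟩)
    · exact Or.inr (Or.inl h)
    · exact Or.inl h
    · exact Or.inr (Or.inr ⟨h.symm, h ▸ hm⟩)
    · exact Or.inr (Or.inl h)
    · exact Or.inl h
    · exact Or.inr (Or.inr ⟨h.symm, h ▸ hm⟩)
  obtain ⟨v, hv0, hvodd, hAv⟩ := exists_kernel_vec hn hodd L hL A hA
  obtain ⟨u, hu0, huodd, hAtu⟩ := exists_kernel_vec hn hodd L hL Aᵀ hsym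
  set X : Matrix (Fin n) (Fin n) ℝ := Matrix.of fun i j => u i * v j with hX
  have h1 : ∀ i j, A i j * X i j = 0 := by
    intro i j
    rcases eq_or_ne (A i j) 0 with h | h
    · simp [h]
    · have hmem := (hA i j).mp h
      simp only [doublePathE, Set.mem_setOf_eq] at hmem
      rcases hmem with h1 | h2 | ⟨h3, h4⟩
      · rcases Nat.mod_two_eq_zero_or_one i.val with hi | hi
        · have hj : j.val % 2 = 1 := by omega
          simp [hX, hvodd j hj]
        · simp [hX, huodd i hi]
      · rcases Nat.mod_two_eq_zero_or_one i.val with hi | hi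
        · have hj : j.val % 2 = 1 := by omega
          simp [hX, hvodd j hj]
        · simp [hX, huodd i hi]
      · simp [hX, huodd i (hL i h4)]
  have h2 : A * Xᵀ - Xᵀ * A = 0 := by
    have e1 : A * Xᵀ = 0 := by
      ext i j
      simp only [Matrix.mul_apply, Matrix.transpose_apply, Matrix.of_apply, Matrix.zero_apply, hX]
      have heq : ∑ k, A i k * (u j * v k) = u j * ∑ k, A i k * v k := by
        rw [Finset.mul_sum]
        exact Finset.sum_congr rfl fun k _ => by ring
      rw [heq]
      have h := congrFun hAv i
      simp only [Matrix.mulVec, dotProduct, Pi.zero_apply] at h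
      rw [h, mul_zero]
    have e2 : Xᵀ * A = 0 := by
      ext i j
      simp only [Matrix.mul_apply, Matrix.transpose_apply, Matrix.of_apply, Matrix.zero_apply, hX]
      have heq : ∑ k, u k * v i * A k j = v i * ∑ k, Aᵀ j k * u k := by
        rw [Finset.mul_sum]
        exact Finset.sum_congr rfl fun k _ => by simp [Matrix.transpose_apply]; ring
      rw [heq]
      have h := congrFun hAtu j
      simp only [Matrix.mulVec, dotProduct, Pi.zero_apply] at h
      rw [h, mul_zero]
    rw [e1, e2, sub_zero]
  have hX0 := hN X h1 h2
  have hone : X ⟨0, by omega⟩ ⟨0, by omega⟩ = 1 := by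
    simp [hX, hu0 ⟨0, by omega⟩ rfl, hv0 ⟨0, by omega⟩ rfl]
  rw [hX0] at hone
  simp at hone
end
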